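/- Let q be a prime power and c ∈ F_q be such that x²−x−c is irreducible over F_q; let θ ∈ F_{q²} be a root of x²−x−c, let D be the order of [D(c)] in PGL₂(F_q), where D(c) = [[0,1],[c,1]], and define g_c(x) = (θ^q·(x+θ^q)^D − θ·(x+θ)^D)/(θ^q−θ) and h_c(x) = ((x+θ^q)^D − (x+θ)^D)/(θ^q−θ). Then: (i) g_c and h_c have all coefficients in F_q, are relatively prime, and have degrees D and D−1 respectively; (ii) every root of h_c lies in F_{q²}; (iii) θ^D ∈ F_q and, as polynomial identities, (x+1)^D·g_c(c/(x+1)) = θ^D·g_c(x) and (x+1)^D·h_c(c/(x+1)) = θ^D·h_c(x). -/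

import Mathlib

open Polynomial

noncomputable section

namespace PGLAct

variable {F : Type} [Field F]

/-- The composition `A ∘ f = ∑ aᵢ (a x + c)^i (b x + d)^{k-i}` for `A = [[a,b],[c,d]]`. -/
def mcirc (A : Matrix (Fin 2) (Fin 2) F) (f : F[X]) : F[X] :=
  ∑ i ∈ Finset.range (f.natDegree + 1),
    C (f.coeff i) * (C (A 0 0) * X + C (A 1 0)) ^ i *
      (C (A 0 1) * X + C (A 1 1)) ^ (f.natDegree - i)

/-- The composition `[A] ∘ f`: the monic normalization of `A ∘ f`. -/
def pcirc (A : Matrix (Fin 2) (Fin 2) F) (f : F[X]) : F[X] :=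
  C (mcirc A f).leadingCoeff⁻¹ * mcirc A f

/-- The subgroup of scalar matrices in `GL₂(F)`. -/
def scalarSub (F : Type) [Field F] : Subgroup (GL (Fin 2) F) :=
  (Units.map ((Matrix.scalar (Fin 2)).toMonoidHom : F →* Matrix (Fin 2) (Fin 2) F)).range

instance scalarSub_normal (F : Type) [Field F] : (scalarSub F).Normal := by
  constructor
  intro n hn g
  obtain ⟨u, hu⟩ := hn
  refine ⟨u, ?_⟩
  ext : 1
  have hcomm : Commute ((Matrix.scalar (Fin 2)) (u : F)) (g : Matrix (Fin 2) (Fin 2) F) :=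
    Matrix.scalar_commute _ (fun r' => Commute.all _ r') _
  have hval : (n : Matrix (Fin 2) (Fin 2) F) = (Matrix.scalar (Fin 2)) (u : F) := by
    rw [← hu]; rfl
  calc ((Units.map ((Matrix.scalar (Fin 2)).toMonoidHom : F →* Matrix (Fin 2) (Fin 2) F)) u :
        GL (Fin 2) F).val
      = (Matrix.scalar (Fin 2)) (u : F) := rfl
    _ = (g : Matrix (Fin 2) (Fin 2) F) * (Matrix.scalar (Fin 2)) (u : F)
        * ((g⁻¹ : GL (Fin 2) F) : Matrix (Fin 2) (Fin 2) F) := by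
        rw [← hcomm.eq, mul_assoc, ← Units.val_mul, mul_inv_cancel]
        simp
    _ = ((g * n * g⁻¹ : GL (Fin 2) F) : Matrix (Fin 2) (Fin 2) F) := by
        simp [Units.val_mul, hval]

/-- `PGL₂(F)`, the projective general linear group. -/
def PGL2 (F : Type) [Field F] : Type := GL (Fin 2) F ⧸ scalarSub F

instance : Group (PGL2 F) := inferInstanceAs (Group (GL (Fin 2) F ⧸ scalarSub F))

/-- The natural projection `GL₂(F) → PGL₂(F)`, `A ↦ [A]`. -/
def toPGL (F : Type) [Field F] : GL (Fin 2) F →* PGL2 F := QuotientGroup.mk' (scalarSub F)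

/-- The polynomial `F_{A,r} = b x^{q^r+1} - a x^{q^r} + d x - c`. -/
def FAr [Fintype F] (A : Matrix (Fin 2) (Fin 2) F) (r : ℕ) : F[X] :=
  C (A 0 1) * X ^ (Fintype.card F ^ r + 1) - C (A 0 0) * X ^ (Fintype.card F ^ r)
    + C (A 1 1) * X - C (A 1 0)


/-- The σ-product of `A = [[a,b],[c,d]]` and `A₀ = [[a₀,b₀],[c₀,d₀]]`. -/
def sigmaProd (A A0 : Matrix (Fin 2) (Fin 2) F) : Matrix (Fin 2) (Fin 2) F :=
  !![-(A 0 1 * (A0 0 0 * A0 1 0) - A 0 0 * (A0 0 0 * A0 1 1) + A 1 1 * (A0 1 0 * A0 0 1)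
        - A 1 0 * (A0 0 1 * A0 1 1)),
     A 0 1 * A0 0 0 ^ 2 - A 0 0 * (A0 0 0 * A0 0 1) + A 1 1 * (A0 0 0 * A0 0 1)
        - A 1 0 * A0 0 1 ^ 2;
     -(A 0 1 * A0 1 0 ^ 2 - A 0 0 * (A0 1 0 * A0 1 1) + A 1 1 * (A0 1 1 * A0 1 0)
        - A 1 0 * A0 1 1 ^ 2),
     A 0 1 * (A0 0 0 * A0 1 0) - A 0 0 * (A0 1 0 * A0 0 1) + A 1 1 * (A0 1 1 * A0 0 0)
        - A 1 0 * (A0 0 1 * A0 1 1)]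

end PGLAct



section AuxLemmas

open Polynomial

private lemma mem_range_iff_pow_card {F K : Type} [Field F] [Fintype F] [Field K] [Fintype K]
    [Algebra F K] (x : K) :
    x ∈ (algebraMap F K).range ↔ x ^ Fintype.card F = x := by
  constructor
  · rintro ⟨a, rfl⟩
    rw [← map_pow, FiniteField.pow_card]
  · intro hx
    classical
    by_contra hmem
    set q := Fintype.card F with hq
    have hq1 : 1 < q := Fintype.one_lt_card
    set P : K[X] := X ^ q - X with hP
    have hP0 : P ≠ 0 := FiniteField.X_pow_card_sub_X_ne_zero K hq1
    have hPdeg : P.natDegree = q := FiniteField.X_pow_card_sub_X_natDegree_eq K hq1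
    set S : Finset K := Finset.univ.image (algebraMap F K) with hS
    have hScard : S.card = q := by
      rw [hS, Finset.card_image_of_injective _ (algebraMap F K).injective, Finset.card_univ]
    have hxS : x ∉ S := by
      intro hx'
      rw [hS, Finset.mem_image] at hx'
      obtain ⟨a, -, rfl⟩ := hx'
      exact hmem ⟨a, rfl⟩
    have hsub : insert x S ⊆ P.roots.toFinset := by
      intro y hy
      rw [Multiset.mem_toFinset, mem_roots hP0]
      rw [Finset.mem_insert] at hy
      rcases hy with rfl | hy
      · simp [hP, IsRoot, hx]
      · rw [hS, Finset.mem_image] at hy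
        obtain ⟨a, -, rfl⟩ := hy
        simp [hP, IsRoot, ← map_pow, FiniteField.pow_card (a := a)]
        rw [hq, FiniteField.pow_card, sub_self]
    have h1 : (insert x S).card = q + 1 := by
      rw [Finset.card_insert_of_notMem hxS, hScard]
    have h2 : (insert x S).card ≤ P.roots.toFinset.card := Finset.card_le_card hsub
    have h3 : P.roots.toFinset.card ≤ Multiset.card P.roots := P.roots.toFinset_card_le
    have h4 : Multiset.card P.roots ≤ P.natDegree := P.card_roots'
    omega

private lemma pow_rep {F K : Type} [Field F] [Field K] [Algebra F K] (c : F)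
    (θ : K) (hθ2 : θ ^ 2 = θ + algebraMap F K c)
    (M : GL (Fin 2) F) (hM : M.val = !![0,1;c,1]) (n : ℕ) :
    ∃ a b : F, (M ^ n).val = !![a, b; c*b, a+b] ∧
      θ ^ n = algebraMap F K a + algebraMap F K b * θ := by
  induction n with
  | zero =>
    refine ⟨1, 0, ?_, by simp⟩
    ext i j
    fin_cases i <;> fin_cases j <;> simp [Matrix.one_apply]
  | succ n ih =>
    obtain ⟨a, b, h1, h2⟩ := ih
    refine ⟨b * c, a + b, ?_, ?_⟩
    · rw [pow_succ, Units.val_mul, h1, hM, Matrix.mul_fin_two]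
      ext i j
      fin_cases i <;> fin_cases j <;> simp <;> ring
    · rw [pow_succ, h2]
      rw [map_mul, map_add]
      have : (algebraMap F K a + algebraMap F K b * θ) * θ
          = algebraMap F K a * θ + algebraMap F K b * θ ^ 2 := by ring
      rw [this, hθ2]
      ring

private lemma scalar_iff {F K : Type} [Field F] [Field K] [Algebra F K] (c : F)
    (θ : K) (hθ2 : θ ^ 2 = θ + algebraMap F K c) (hθr : θ ∉ (algebraMap F K).range)
    (M : GL (Fin 2) F) (hM : M.val = !![0,1;c,1]) (n : ℕ) :
    (M ^ n ∈ PGLAct.scalarSub F) ↔ θ ^ n ∈ (algebraMap F K).range := by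
  obtain ⟨a, b, h1, h2⟩ := pow_rep c θ hθ2 M hM n
  have hb_iff : (M ^ n ∈ PGLAct.scalarSub F) ↔ b = 0 := by
    constructor
    · rintro ⟨u, hu⟩
      have := congrArg Units.val hu
      have h01 : ((M ^ n).val) 0 1 = b := by rw [h1]; simp
      rw [← this] at h01
      simpa [Matrix.scalar] using h01.symm
    · intro hb
      have ha : a ≠ 0 := by
        intro ha
        have : (M ^ n).val = 0 := by
          rw [h1, ha, hb]
          ext i j; fin_cases i <;> fin_cases j <;> simp
        have : IsUnit (0 : Matrix (Fin 2) (Fin 2) F) := this ▸ (M ^ n).isUnit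
        simp at this
      refine ⟨Units.mk0 a ha, ?_⟩
      ext : 1
      rw [h1, hb]
      simp [Matrix.scalar]
      ext i j; fin_cases i <;> fin_cases j <;> simp [Matrix.one_apply]
  rw [hb_iff]
  constructor
  · rintro rfl
    exact ⟨a, by simp [h2]⟩
  · rintro ⟨t, ht⟩
    by_contra hb
    apply hθr
    refine ⟨(t - a) / b, ?_⟩
    have hbne : algebraMap F K b ≠ 0 := fun h => hb ((algebraMap F K).injective (by simp [h]))
    rw [map_div₀, map_sub]
    rw [← ht] at h2
    field_simp
    linear_combination h2

end AuxLemmas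

/-- Properties of the rational function `Q_c = g_c/h_c` attached to the
type-4 element `D(c)`: `g_c, h_c` have coefficients in `F_q`, are coprime of degrees `D` and
`D-1`, all roots of `h_c` lie in `F_{q²}`, `θ^D ∈ F_q`, and both satisfy
`(x+1)^D·P(c/(x+1)) = θ^D·P(x)`. -/
theorem type_four_rational_function {F K : Type} [Field F] [Fintype F] [Field K] [Fintype K]
    [Algebra F K] (hK : Fintype.card K = Fintype.card F ^ 2)
    (c : F) (hc : Irreducible (X ^ 2 - X - C c : F[X]))
    (θ : K) (hθ : θ ^ 2 - θ - algebraMap F K c = 0)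
    (M : GL (Fin 2) F) (hM : M.val = !![0, 1; c, 1])
    (D : ℕ) (hD : D = orderOf (PGLAct.toPGL F M))
    (g h : K[X])
    (hg : g = C (θ ^ Fintype.card F - θ)⁻¹ *
      (C (θ ^ Fintype.card F) * (X + C (θ ^ Fintype.card F)) ^ D - C θ * (X + C θ) ^ D))
    (hh : h = C (θ ^ Fintype.card F - θ)⁻¹ *
      ((X + C (θ ^ Fintype.card F)) ^ D - (X + C θ) ^ D)) :
    ((∀ i, g.coeff i ∈ (algebraMap F K).range) ∧ (∀ i, h.coeff i ∈ (algebraMap F K).range) ∧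
      IsCoprime g h ∧ g.natDegree = D ∧ h.natDegree = D - 1) ∧
    (h.Splits) ∧
    (θ ^ D ∈ (algebraMap F K).range ∧
      (∑ i ∈ Finset.range (D + 1),
          C (g.coeff i * (algebraMap F K c) ^ i) * (X + 1) ^ (D - i) = C (θ ^ D) * g) ∧
      (∑ i ∈ Finset.range (D + 1),
          C (h.coeff i * (algebraMap F K c) ^ i) * (X + 1) ^ (D - i) = C (θ ^ D) * h)) := by
    classical
  set q := Fintype.card F with hq
  have hq1 : 1 < q := Fintype.one_lt_card
  set cb : K := algebraMap F K c with hcb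
  have hθ2 : θ ^ 2 = θ + cb := by linear_combination hθ
  -- θ is not in the base field
  have hθr : θ ∉ (algebraMap F K).range := by
    rintro ⟨t, ht⟩
    have hft : t ^ 2 - t - c = 0 := by
      apply (algebraMap F K).injective
      rw [map_zero, map_sub, map_sub, map_pow, ht]
      linear_combination hθ
    have hfact : (X ^ 2 - X - C c : F[X]) = (X - C t) * (X - C (1 - t)) := by
      have hct : (C c : F[X]) = C t ^ 2 - C t := by
        rw [← C_pow, ← C_sub]
        exact congrArg C (by linear_combination -hft)
      rw [map_sub, map_one]
      linear_combination -hct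
    rcases hc.isUnit_or_isUnit hfact with hu | hu
    · exact Polynomial.not_isUnit_of_natDegree_pos _
        (by rw [natDegree_X_sub_C]; norm_num) hu
    · exact Polynomial.not_isUnit_of_natDegree_pos _
        (by rw [natDegree_X_sub_C]; norm_num) hu
  -- characteristic and Frobenius
  set p := ringChar F with hpdef
  have hp : p.Prime := CharP.char_is_prime F p
  haveI : Fact p.Prime := ⟨hp⟩
  haveI hKp : CharP K p := charP_of_injective_algebraMap (algebraMap F K).injective p
  obtain ⟨k, -, hcardF⟩ := FiniteField.card F p
  set φ : K →+* K := iterateFrobenius K p k with hφdef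
  have hφ : ∀ x : K, φ x = x ^ q := by
    intro x
    rw [hφdef, iterateFrobenius_def, ← hcardF]
  -- basic facts about θ' = θ^q
  set θ' : K := θ ^ q with hθ'def
  have hrfix : ∀ x : K, x ∈ (algebraMap F K).range → x ^ q = x := fun x hx =>
    (mem_range_iff_pow_card x).mp hx
  have hcbq : cb ^ q = cb := hrfix _ ⟨c, rfl⟩
  have hθ'2 : θ' ^ 2 = θ' + cb := by
    have h := congrArg φ hθ2
    rw [map_pow, map_add, hφ θ, hφ cb, hcbq] at h
    exact h
  have hθ'θ : θ' ≠ θ := fun h => hθr ((mem_range_iff_pow_card θ).mpr h)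
  have hs : θ' - θ ≠ 0 := sub_ne_zero.mpr hθ'θ
  have hsum : θ' = 1 - θ := by
    have h0 : (θ' - θ) * (θ' + θ - 1) = 0 := by linear_combination hθ'2 - hθ2
    rcases mul_eq_zero.mp h0 with h | h
    · exact absurd h hs
    · linear_combination h
  have hθ0 : θ ≠ 0 := by
    intro h
    rw [hθ'def, h, zero_pow (show q ≠ 0 by omega)] at hsum
    norm_num at hsum
  have hθ'0 : θ' ≠ 0 := pow_ne_zero _ hθ0
  have hθ'q : θ' ^ q = θ := by
    rw [hθ'def, ← pow_mul]
    have h := FiniteField.pow_card θ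
    rwa [hK, sq] at h
  have hφθ' : φ θ' = θ := by rw [hφ, hθ'q]
  -- the element z = θ'/θ and its order
  set z : K := θ' / θ with hzdef
  have hzne : z ≠ 0 := div_ne_zero hθ'0 hθ0
  have hpowq : ∀ n : ℕ, (θ ^ n) ^ q = θ' ^ n := by
    intro n
    rw [hθ'def, ← pow_mul, ← pow_mul, mul_comm]
  have hzmem : ∀ n : ℕ, z ^ n = 1 ↔ θ ^ n ∈ (algebraMap F K).range := by
    intro n
    rw [mem_range_iff_pow_card, ← hq, hpowq n, hzdef, div_pow,
      div_eq_one_iff_eq (pow_ne_zero n hθ0)]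
  have hDz : D = orderOf z := by
    rw [hD, orderOf_eq_orderOf_iff]
    intro n
    rw [← map_pow]
    have h1 : (PGLAct.toPGL F) (M ^ n) = 1 ↔ M ^ n ∈ PGLAct.scalarSub F :=
      QuotientGroup.eq_one_iff _
    rw [h1, scalar_iff c θ hθ2 hθr M hM n, ← hzmem n]
  have hzq2 : z ^ (q ^ 2 - 1) = 1 := by
    have h := FiniteField.pow_card_sub_one_eq_one z hzne
    rwa [hK] at h
  have hDdvd : D ∣ q ^ 2 - 1 := hDz ▸ orderOf_dvd_of_pow_eq_one hzq2
  have hq4 : 4 ≤ q ^ 2 := by nlinarith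
  have hq2pos : 0 < q ^ 2 - 1 := by omega
  have hD0 : D ≠ 0 := by
    intro h
    rw [h] at hDdvd
    omega
  have hzD : z ^ D = 1 := by rw [hDz]; exact pow_orderOf_eq_one z
  have hθDr : θ ^ D ∈ (algebraMap F K).range := (hzmem D).mp hzD
  have hθ'D : θ' ^ D = θ ^ D := by
    rw [← hpowq D]
    exact hrfix _ hθDr
  have hDK : (D : K) ≠ 0 := by
    rw [Ne, CharP.cast_eq_zero_iff K p]
    intro hpd
    have h1 : p ∣ q ^ 2 - 1 := dvd_trans hpd hDdvd
    have h2 : p ∣ q := by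
      rw [hq, hcardF]
      exact dvd_pow_self p (by exact_mod_cast k.ne_zero)
    have h3 : p ∣ q ^ 2 := dvd_pow h2 two_ne_zero
    have hp1 : p ∣ 1 := by
      have hd := Nat.dvd_sub h3 h1
      rwa [Nat.sub_sub_self (by omega : 1 ≤ q ^ 2)] at hd
    exact hp.ne_one (Nat.dvd_one.mp hp1)
  -- polynomial setup
  set u : K[X] := (X + C θ) ^ D with hu
  set u' : K[X] := (X + C θ') ^ D with hu'
  set s : K := (θ' - θ)⁻¹ with hsdef
  have hsC : (C s * (C θ' - C θ) : K[X]) = 1 := by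
    rw [← C_sub, ← C_mul, hsdef, inv_mul_cancel₀ hs, C_1]
  have hgu : g - C θ * h = u' := by
    rw [hg, hh]
    linear_combination u' * hsC
  have hgv : g - C θ' * h = u := by
    rw [hg, hh]
    linear_combination u * hsC
  have hcu : ∀ m, u.coeff m = θ ^ (D - m) * (D.choose m : K) := by
    intro m; rw [hu]; exact coeff_X_add_C_pow θ D m
  have hcu' : ∀ m, u'.coeff m = θ' ^ (D - m) * (D.choose m : K) := by
    intro m; rw [hu']; exact coeff_X_add_C_pow θ' D m
  have hdu : u.natDegree = D := by
    rw [hu, (monic_X_add_C θ).natDegree_pow, natDegree_X_add_C, mul_one]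
  have hdu' : u'.natDegree = D := by
    rw [hu', (monic_X_add_C θ').natDegree_pow, natDegree_X_add_C, mul_one]
  have hcoeffg : ∀ m, g.coeff m = s * (θ' * u'.coeff m - θ * u.coeff m) := by
    intro m
    rw [hg]
    simp [coeff_C_mul, coeff_sub]
  have hcoeffh : ∀ m, h.coeff m = s * (u'.coeff m - u.coeff m) := by
    intro m
    rw [hh]
    simp [coeff_C_mul, coeff_sub]
  have hgD : g.coeff D = 1 := by
    rw [hcoeffg D, hcu D, hcu' D, Nat.sub_self]
    simp only [pow_zero, Nat.choose_self, Nat.cast_one, mul_one, one_mul]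
    rw [hsdef]
    exact inv_mul_cancel₀ hs
  have hgm : ∀ m, D < m → g.coeff m = 0 := by
    intro m hm
    rw [hcoeffg m, coeff_eq_zero_of_natDegree_lt (show u.natDegree < m by rw [hdu]; exact hm),
      coeff_eq_zero_of_natDegree_lt (show u'.natDegree < m by rw [hdu']; exact hm)]
    ring
  have hgdeg : g.natDegree = D :=
    le_antisymm (natDegree_le_iff_coeff_eq_zero.mpr hgm)
      (le_natDegree_of_ne_zero (by rw [hgD]; exact one_ne_zero))
  have hhD : h.coeff D = 0 := by
    rw [hcoeffh D, hcu D, hcu' D, Nat.sub_self]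
    ring
  have hhm : ∀ m, D - 1 < m → h.coeff m = 0 := by
    intro m hm
    rcases eq_or_lt_of_le (by omega : D ≤ m) with rfl | hm'
    · exact hhD
    · rw [hcoeffh m, coeff_eq_zero_of_natDegree_lt (show u.natDegree < m by rw [hdu]; exact hm'),
        coeff_eq_zero_of_natDegree_lt (show u'.natDegree < m by rw [hdu']; exact hm')]
      ring
  have hchoose : (D.choose (D - 1) : K) = (D : K) := by
    have h1 : D.choose (D - 1) = D := by
      have := Nat.choose_symm (by omega : 1 ≤ D)
      rw [this, Nat.choose_one_right]
    rw [h1]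
  have hhD1 : h.coeff (D - 1) = (D : K) := by
    rw [hcoeffh (D - 1), hcu (D - 1), hcu' (D - 1), show D - (D - 1) = 1 by omega,
      pow_one, pow_one, hchoose, hsdef]
    field_simp
  have hhdeg : h.natDegree = D - 1 :=
    le_antisymm (natDegree_le_iff_coeff_eq_zero.mpr hhm)
      (le_natDegree_of_ne_zero (by rw [hhD1]; exact hDK))
  have hh0 : h ≠ 0 := fun h0 => hDK (by rw [← hhD1, h0, coeff_zero])
  -- coefficients lie in the base field
  have hφθ : φ θ = θ' := by rw [hθ'def]; exact hφ θ
  have hinvneg : (θ - θ')⁻¹ = -s := by rw [hsdef, ← neg_sub, inv_neg]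
  have hφmapg : g.map φ = g := by
    rw [hg, hu, hu', hsdef]
    simp only [Polynomial.map_mul, Polynomial.map_sub, Polynomial.map_pow,
      Polynomial.map_add, Polynomial.map_C, Polynomial.map_X]
    rw [map_inv₀, map_sub, hφθ, hφθ', hinvneg, hsdef]
    rw [show ((-(θ' - θ)⁻¹ : K)) = -((θ' - θ)⁻¹) from rfl, map_neg]
    ring
  have hφmaph : h.map φ = h := by
    rw [hh, hu, hu', hsdef]
    simp only [Polynomial.map_mul, Polynomial.map_sub, Polynomial.map_pow,
      Polynomial.map_add, Polynomial.map_C, Polynomial.map_X]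
    rw [map_inv₀, map_sub, hφθ, hφθ', hinvneg, hsdef]
    rw [show ((-(θ' - θ)⁻¹ : K)) = -((θ' - θ)⁻¹) from rfl, map_neg]
    ring
  have hrangeg : ∀ i, g.coeff i ∈ (algebraMap F K).range := by
    intro i
    rw [mem_range_iff_pow_card, ← hq]
    have hco := congrArg (fun P : K[X] => P.coeff i) hφmapg
    simpa [Polynomial.coeff_map, hφ] using hco
  have hrangeh : ∀ i, h.coeff i ∈ (algebraMap F K).range := by
    intro i
    rw [mem_range_iff_pow_card, ← hq]
    have hco := congrArg (fun P : K[X] => P.coeff i) hφmaph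
    simpa [Polynomial.coeff_map, hφ] using hco
  -- coprimality
  have hlin : IsCoprime (X + C θ : K[X]) (X + C θ') := by
    have h1 := Polynomial.isCoprime_X_sub_C_of_isUnit_sub
      (show IsUnit ((-θ) - (-θ')) by
        rw [show (-θ) - (-θ') = θ' - θ by ring]; exact hs.isUnit)
    simpa [map_neg, sub_neg_eq_add] using h1
  have hcop : IsCoprime u u' := by rw [hu, hu']; exact hlin.pow
  have hcoprime : IsCoprime g h := by
    obtain ⟨A, B, hAB⟩ := hcop
    exact ⟨A + B, -(A * C θ' + B * C θ), by linear_combination hAB + A * hgv + B * hgu⟩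
  -- splitting of h
  have hzpow : ∀ j, 0 < j → j < D → z ^ j ≠ 1 := fun j hj0 hjD =>
    pow_ne_one_of_lt_orderOf (by omega) (by rw [← hDz]; exact hjD)
  set α : ℕ → K := fun j => (1 - z ^ j)⁻¹ * (θ - θ') - θ with hα
  have hwne : ∀ j, 0 < j → j < D → (1 - z ^ j) ≠ 0 := by
    intro j h1 h2 h0
    exact hzpow j h1 h2 (by linear_combination -h0)
  have hθθ' : θ - θ' ≠ 0 := sub_ne_zero.mpr (Ne.symm hθ'θ)
  have hroot : ∀ j ∈ Finset.Ico 1 D, h.IsRoot (α j) := by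
    intro j hj
    rw [Finset.mem_Ico] at hj
    have hne := hwne j hj.1 hj.2
    have hα1 : α j + θ = (1 - z ^ j)⁻¹ * (θ - θ') := by rw [hα]; ring
    have hα2 : α j + θ' = z ^ j * ((1 - z ^ j)⁻¹ * (θ - θ')) := by
      rw [hα]
      field_simp
      ring
    rw [IsRoot, hh, eval_mul, eval_C, eval_sub, eval_pow, eval_pow, eval_add, eval_add,
      eval_C, eval_C, eval_X, hα1, hα2, mul_pow,
      show ((z : K) ^ j) ^ D = (z ^ D) ^ j from by rw [← pow_mul, ← pow_mul, mul_comm],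
      hzD, one_pow]
    ring
  have hinj : Set.InjOn α ((Finset.Ico 1 D : Finset ℕ) : Set ℕ) := by
    intro i hi j hj hij
    rw [Finset.coe_Ico, Set.mem_Ico] at hi hj
    have hij' : (1 - z ^ i)⁻¹ * (θ - θ') = (1 - z ^ j)⁻¹ * (θ - θ') := by
      rw [hα] at hij
      simp only at hij
      linear_combination hij
    have h2 : (1 - z ^ i)⁻¹ = (1 - z ^ j)⁻¹ := mul_right_cancel₀ hθθ' hij'
    have h3 : 1 - z ^ i = 1 - z ^ j := by
      rw [← inv_inv (1 - z ^ i), h2, inv_inv]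
    have h4 : z ^ i = z ^ j := by linear_combination -h3
    exact pow_injOn_Iio_orderOf (x := z)
      (by rw [Set.mem_Iio, ← hDz]; exact hi.2) (by rw [Set.mem_Iio, ← hDz]; exact hj.2) h4
  have hsubroots : (Finset.Ico 1 D).image α ⊆ h.roots.toFinset := by
    intro y hy
    rw [Finset.mem_image] at hy
    obtain ⟨j, hj, rfl⟩ := hy
    rw [Multiset.mem_toFinset, mem_roots hh0]
    exact hroot j hj
  have hcard1 : ((Finset.Ico 1 D).image α).card = D - 1 := by
    rw [Finset.card_image_of_injOn hinj, Nat.card_Ico]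
  have hcards : Multiset.card h.roots = h.natDegree := by
    have hle := h.card_roots'
    have hge : D - 1 ≤ h.roots.toFinset.card := by
      rw [← hcard1]
      exact Finset.card_le_card hsubroots
    have htf := h.roots.toFinset_card_le
    rw [hhdeg]
    omega
  have hsplits : h.Splits := splits_iff_card_roots.mpr hcards
  -- the functional equations
  set T : K[X] → K[X] :=
    fun f => ∑ i ∈ Finset.range (D + 1), C (f.coeff i * cb ^ i) * (X + 1) ^ (D - i) with hT
  have hTpow : ∀ a : K, a ^ 2 = a + cb → T ((X + C a) ^ D) = C (a ^ D) * (X + C a) ^ D := by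
    intro a ha
    rw [hT]
    simp only
    have hterm : ∀ i ∈ Finset.range (D + 1),
        C (((X + C a) ^ D).coeff i * cb ^ i) * (X + 1) ^ (D - i)
          = (C cb) ^ i * (C a * (X + 1)) ^ (D - i) * (D.choose i : K[X]) := by
      intro i hi
      rw [coeff_X_add_C_pow]
      simp only [C_mul, C_pow, C_eq_natCast]
      rw [mul_pow]
      ring
    rw [Finset.sum_congr rfl hterm, ← Commute.add_pow (Commute.all _ _)]
    have hkey : (C cb + C a * (X + 1) : K[X]) = C a * (X + C a) := by
      have hca : (C a : K[X]) ^ 2 = C a + C cb := by rw [← C_pow, ha, C_add]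
      linear_combination -hca
    rw [hkey, mul_pow, ← C_pow]
  have hTadd : ∀ f₁ f₂ : K[X], T (f₁ + f₂) = T f₁ + T f₂ := by
    intro f₁ f₂
    rw [hT]
    simp only [coeff_add]
    rw [← Finset.sum_add_distrib]
    refine Finset.sum_congr rfl fun i _ => ?_
    rw [add_mul, C_add, add_mul]
  have hTsmul : ∀ (b : K) (f : K[X]), T (C b * f) = C b * T f := by
    intro b f
    rw [hT]
    simp only [coeff_C_mul]
    rw [Finset.mul_sum]
    refine Finset.sum_congr rfl fun i _ => ?_
    rw [mul_assoc b, C_mul, mul_assoc]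
  have hgsplit : g = C (s * θ') * u' + C (-(s * θ)) * u := by
    rw [hg]
    simp only [C_mul, C_neg]
    ring
  have hhsplit : h = C s * u' + C (-s) * u := by
    rw [hh]
    simp only [C_neg]
    ring
  have hTg : T g = C (θ ^ D) * g := by
    rw [hgsplit, hTadd, hTsmul, hTsmul, hu, hu', hTpow θ hθ2, hTpow θ' hθ'2, hθ'D]
    simp only [C_mul, C_neg]
    ring
  have hTh : T h = C (θ ^ D) * h := by
    rw [hhsplit, hTadd, hTsmul, hTsmul, hu, hu', hTpow θ hθ2, hTpow θ' hθ'2, hθ'D]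
    simp only [C_neg]
    ring
  exact ⟨⟨hrangeg, hrangeh, hcoprime, hgdeg, hhdeg⟩, hsplits, hθDr, hTg, hTh⟩
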